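/- Let A be a bounded normal operator on a complex Hilbert space H and B a d×d complex matrix (d ≥ 1). Then the spectrum of the operator T realizing A⊗1 + 1⊗B on the d-fold Hilbert direct sum H^d equals the Minkowski sum σ(A) + σ(B), i.e. σ(T) = {a + b : a ∈ σ(A), b ∈ σ(B)}. -/

import Mathlib

open scoped Pointwise

open Polynomial ContinuousLinearMap

set_option maxHeartbeats 1000000
set_option synthInstance.maxHeartbeats 400000

section RingHelpers

variable {R : Type*} [Ring R]

lemma isUnit_of_eq_mul' (a s u : R) (hu : IsUnit u) (h1 : u = a * s) (h2 : u = s * a) :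
    IsUnit a := by
  obtain ⟨w, rfl⟩ := hu
  have har : a * (s * ↑w⁻¹) = 1 := by
    rw [← mul_assoc, ← h1, Units.mul_inv]
  have hla : (↑w⁻¹ * s) * a = 1 := by
    rw [mul_assoc, ← h2, Units.inv_mul]
  have heq : (↑w⁻¹ * s : R) = s * ↑w⁻¹ := by
    calc (↑w⁻¹ * s : R) = (↑w⁻¹ * s) * (a * (s * ↑w⁻¹)) := by rw [har, mul_one]
      _ = ((↑w⁻¹ * s) * a) * (s * ↑w⁻¹) := by noncomm_ring
      _ = s * ↑w⁻¹ := by rw [hla, one_mul]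
  exact ⟨⟨a, s * ↑w⁻¹, har, by rw [← heq]; exact hla⟩, rfl⟩

end RingHelpers

section MatrixHelpers

variable {n : Type*} [Fintype n] [DecidableEq n]

lemma root_charpoly_mem_spectrum' [Nonempty n] (B : Matrix n n ℂ) {b : ℂ}
    (hb : B.charpoly.IsRoot b) : b ∈ spectrum ℂ B := by
  rw [spectrum.mem_iff]
  intro hunit
  have hdet := (Matrix.isUnit_iff_isUnit_det _).mp hunit
  have heval : B.charpoly.eval b = (Matrix.scalar n b - B).det := by
    rw [Matrix.charpoly, eval_det, Matrix.matPolyEquiv_charmatrix]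
    simp
  have halg : algebraMap ℂ (Matrix n n ℂ) b = Matrix.scalar n b := by
    rw [Matrix.scalar_apply, Matrix.algebraMap_eq_diagonal]
    rfl
  rw [halg] at hdet
  rw [Polynomial.IsRoot.def, heval] at hb
  rw [hb] at hdet
  exact not_isUnit_zero hdet

lemma exists_eigenvector_of_mem_spectrum' (B : Matrix n n ℂ) {b : ℂ}
    (hb : b ∈ spectrum ℂ B) : ∃ v : n → ℂ, v ≠ 0 ∧ B.mulVec v = b • v := by
  rw [spectrum.mem_iff] at hb
  have hdet : (algebraMap ℂ (Matrix n n ℂ) b - B).det = 0 := by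
    by_contra h
    exact hb ((Matrix.isUnit_iff_isUnit_det _).mpr (isUnit_iff_ne_zero.mpr h))
  obtain ⟨v, hv, hv0⟩ := (Matrix.exists_mulVec_eq_zero_iff.mpr hdet)
  refine ⟨v, hv, ?_⟩
  rw [Matrix.sub_mulVec] at hv0
  have h2 : (algebraMap ℂ (Matrix n n ℂ) b).mulVec v = b • v := by
    rw [Algebra.algebraMap_eq_smul_one, Matrix.smul_mulVec, Matrix.one_mulVec]
  rw [h2] at hv0
  rw [sub_eq_zero] at hv0
  exact hv0.symm

end MatrixHelpers

section OpHelpers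

variable {H : Type*} [NormedAddCommGroup H] [InnerProductSpace ℂ H] [CompleteSpace H]

lemma norm_adjoint_apply_eq_of_comm (N : H →L[ℂ] H)
    (hN : star N * N = N * star N) (x : H) : ‖adjoint N x‖ = ‖N x‖ := by
  have h1 := apply_norm_sq_eq_inner_adjoint_left N x
  have h2 := apply_norm_sq_eq_inner_adjoint_left (adjoint N) x
  rw [adjoint_adjoint] at h2
  have hc : N ∘L adjoint N = adjoint N ∘L N := by
    rw [← star_eq_adjoint]; exact hN.symm
  rw [hc, ← h1] at h2
  have h3 := congrArg Real.sqrt h2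
  rwa [Real.sqrt_sq (norm_nonneg _), Real.sqrt_sq (norm_nonneg _)] at h3

lemma isUnit_of_normal_of_bound (N : H →L[ℂ] H) (hN : star N * N = N * star N)
    {c : ℝ} (hc : 0 < c) (hb : ∀ x, c * ‖x‖ ≤ ‖N x‖) : IsUnit N := by
  rw [ContinuousLinearMap.isUnit_iff_bijective]
  have hinj : Function.Injective N := by
    intro u w huw
    have h0 : N (u - w) = 0 := by rw [map_sub, huw, sub_self]
    have h1 := hb (u - w)
    rw [h0, norm_zero] at h1
    have h2 : ‖u - w‖ ≤ 0 := by nlinarith [norm_nonneg (u - w)]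
    have h3 : u - w = 0 := by
      rw [← norm_le_zero_iff]; exact h2
    exact sub_eq_zero.mp h3
  constructor
  · exact hinj
  · -- surjective
    have hanti : AntilipschitzWith (⟨c, hc.le⟩ : NNReal)⁻¹ N := by
      apply ContinuousLinearMap.antilipschitz_of_bound
      intro x
      show ‖x‖ ≤ c⁻¹ * ‖N x‖
      show ‖x‖ ≤ c⁻¹ * ‖N x‖
      calc ‖x‖ = c⁻¹ * (c * ‖x‖) := by field_simp
        _ ≤ c⁻¹ * ‖N x‖ := mul_le_mul_of_nonneg_left (hb x) (by positivity)
    have hclosed : IsClosed (LinearMap.range (N : H →ₗ[ℂ] H) : Set H) := by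
      have h1 := hanti.isClosed_range N.uniformContinuous
      have h2 : (LinearMap.range (N : H →ₗ[ℂ] H) : Set H) = Set.range N := by
        ext w; simp [LinearMap.mem_range]
      rw [h2]; exact h1
    have : CompleteSpace (LinearMap.range (N : H →ₗ[ℂ] H) : Submodule ℂ H) :=
      hclosed.completeSpace_coe
    change Function.Surjective (N : H →ₗ[ℂ] H)
    rw [← LinearMap.range_eq_top, ← Submodule.orthogonal_eq_bot_iff]
    rw [Submodule.eq_bot_iff]
    intro w hw
    have hNsw : adjoint N w = 0 := by
      apply ext_inner_right ℂ
      intro u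
      rw [adjoint_inner_left, inner_zero_left]
      exact inner_eq_zero_symm.mp (hw (N u) (LinearMap.mem_range_self _ u))
    have h1 := hb w
    rw [← norm_adjoint_apply_eq_of_comm N hN w, hNsw, norm_zero] at h1
    have h2 : ‖w‖ ≤ 0 := by nlinarith [norm_nonneg w]
    rwa [← norm_le_zero_iff]

end OpHelpers

section DvdHelper

open Finset in
lemma sub_dvd_aeval_sub_of_commute {R : Type*} [Ring R] [Algebra ℂ R] (x y : R)
    (hxy : Commute x y) (p : Polynomial ℂ) :
    ∃ s : R, aeval x p - aeval y p = (x - y) * s ∧ aeval x p - aeval y p = s * (x - y) := by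
  induction p using Polynomial.induction_on' with
  | add p q hp hq =>
    obtain ⟨s1, h1, h1'⟩ := hp
    obtain ⟨s2, h2, h2'⟩ := hq
    refine ⟨s1 + s2, ?_, ?_⟩
    · rw [map_add, map_add, mul_add, ← h1, ← h2]
      abel
    · rw [map_add, map_add, add_mul, ← h1', ← h2']
      abel
  | monomial n a =>
    refine ⟨algebraMap ℂ R a * (∑ i ∈ range n, x ^ i * y ^ (n - 1 - i)), ?_, ?_⟩
    · calc aeval x (monomial n a) - aeval y (monomial n a)
          = algebraMap ℂ R a * ((x - y) * ∑ i ∈ range n, x ^ i * y ^ (n - 1 - i)) := by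
            rw [aeval_monomial, aeval_monomial, ← mul_sub, hxy.mul_geom_sum₂]
        _ = (algebraMap ℂ R a * (x - y)) * ∑ i ∈ range n, x ^ i * y ^ (n - 1 - i) := by
            rw [mul_assoc]
        _ = ((x - y) * algebraMap ℂ R a) * ∑ i ∈ range n, x ^ i * y ^ (n - 1 - i) := by
            rw [Algebra.commutes]
        _ = (x - y) * (algebraMap ℂ R a * ∑ i ∈ range n, x ^ i * y ^ (n - 1 - i)) := by
            rw [mul_assoc]
    · calc aeval x (monomial n a) - aeval y (monomial n a)
          = algebraMap ℂ R a * ((∑ i ∈ range n, x ^ i * y ^ (n - 1 - i)) * (x - y)) := by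
            rw [aeval_monomial, aeval_monomial, ← mul_sub, hxy.geom_sum₂_mul]
        _ = (algebraMap ℂ R a * ∑ i ∈ range n, x ^ i * y ^ (n - 1 - i)) * (x - y) := by
            rw [mul_assoc]

end DvdHelper

section MatCLM

variable {H : Type*} [NormedAddCommGroup H] [InnerProductSpace ℂ H] [CompleteSpace H]
variable {d : ℕ}

noncomputable def matCLM (M : Matrix (Fin d) (Fin d) (H →L[ℂ] H)) :
    PiLp 2 (fun _ : Fin d => H) →L[ℂ] PiLp 2 (fun _ : Fin d => H) :=
  ((PiLp.continuousLinearEquiv 2 ℂ (fun _ : Fin d => H)).symm.toContinuousLinearMap) ∘L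
    ((ContinuousLinearMap.pi fun i => ∑ j, (M i j) ∘L ContinuousLinearMap.proj j) ∘L
      (PiLp.continuousLinearEquiv 2 ℂ (fun _ : Fin d => H)).toContinuousLinearMap)

lemma matCLM_apply (M : Matrix (Fin d) (Fin d) (H →L[ℂ] H))
    (x : PiLp 2 (fun _ : Fin d => H)) (i : Fin d) :
    matCLM M x i = ∑ j, M i j (x j) := by
  simp [matCLM, ContinuousLinearMap.sum_apply]

lemma matCLM_mul (M N : Matrix (Fin d) (Fin d) (H →L[ℂ] H)) :
    matCLM (M * N) = matCLM M * matCLM N := by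
  ext x : 1
  ext i
  rw [ContinuousLinearMap.mul_apply, matCLM_apply, matCLM_apply]
  simp only [Matrix.mul_apply, ContinuousLinearMap.sum_apply, ContinuousLinearMap.mul_apply]
  rw [Finset.sum_comm]
  congr 1
  funext k
  rw [← map_sum]
  congr 1
  rw [matCLM_apply]

lemma matCLM_one : matCLM (1 : Matrix (Fin d) (Fin d) (H →L[ℂ] H)) = 1 := by
  ext x : 1
  ext i
  rw [matCLM_apply]
  have h : ∀ j, ((if i = j then (1 : H →L[ℂ] H) else 0) : H →L[ℂ] H) (x j)
      = if i = j then x j else 0 := fun j => by split <;> simp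
  simp only [Matrix.one_apply, h]
  simp

lemma matCLM_add (M N : Matrix (Fin d) (Fin d) (H →L[ℂ] H)) :
    matCLM (M + N) = matCLM M + matCLM N := by
  ext x : 1
  ext i
  rw [ContinuousLinearMap.add_apply]
  show matCLM (M + N) x i = matCLM M x i + matCLM N x i
  rw [matCLM_apply, matCLM_apply, matCLM_apply, ← Finset.sum_add_distrib]
  exact Finset.sum_congr rfl fun j _ => by
    rw [Matrix.add_apply, ContinuousLinearMap.add_apply]

noncomputable def matCLMRingHom :
    Matrix (Fin d) (Fin d) (H →L[ℂ] H) →+*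
      (PiLp 2 (fun _ : Fin d => H) →L[ℂ] PiLp 2 (fun _ : Fin d => H)) where
  toFun := matCLM
  map_one' := matCLM_one
  map_mul' := matCLM_mul
  map_zero' := by
    ext x : 1
    ext i
    rw [matCLM_apply]
    simp
  map_add' := matCLM_add

lemma matCLM_isUnit {M : Matrix (Fin d) (Fin d) (H →L[ℂ] H)} (h : IsUnit M) :
    IsUnit (matCLM M) :=
  h.map (matCLMRingHom)

end MatCLM

/-- **Tensor-spectrum lemma, part (i).**
If `A` is a bounded normal operator on a complex Hilbert space `H` and `B` is a
`d × d` complex matrix (`d ≥ 1`), then the spectrum of the operator `T`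
realizing `A ⊗ 1 + 1 ⊗ B` on the `d`-fold Hilbert direct sum `H^d` equals the
Minkowski sum `σ(A) + σ(B)`. -/
theorem spectrum_tensor_sum_normal
    {H : Type*} [NormedAddCommGroup H] [InnerProductSpace ℂ H] [CompleteSpace H]
    (A : H →L[ℂ] H) (hA : IsStarNormal A)
    (d : ℕ) (hd : 1 ≤ d) (B : Matrix (Fin d) (Fin d) ℂ)
    (T : PiLp 2 (fun _ : Fin d => H) →L[ℂ] PiLp 2 (fun _ : Fin d => H))
    (hT : ∀ (x : PiLp 2 (fun _ : Fin d => H)) (i : Fin d),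
      T x i = A (x i) + ∑ j, B i j • x j) :
    spectrum ℂ T = spectrum ℂ A + spectrum ℂ B := by
  haveI : Nonempty (Fin d) := ⟨⟨0, hd⟩⟩
  apply Set.eq_of_subset_of_subset
  · -- σ(T) ⊆ σ(A) + σ(B)
    intro z hz
    by_contra hzmem
    have hzb : ∀ b ∈ spectrum ℂ B, (z - b) ∉ spectrum ℂ A := by
      intro b hb hab
      have hmem := Set.add_mem_add hab hb
      have heq : z - b + b = z := by ring
      rw [heq] at hmem
      exact hzmem hmem
    set xm : Matrix (Fin d) (Fin d) (H →L[ℂ] H) :=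
      Matrix.scalar (Fin d) (algebraMap ℂ (H →L[ℂ] H) z - A) with hxm
    set ym : Matrix (Fin d) (Fin d) (H →L[ℂ] H) :=
      B.map (algebraMap ℂ (H →L[ℂ] H)) with hym
    have hcomm : xm * ym = ym * xm := by
      have h : ∀ i j, (xm * ym) i j = (ym * xm) i j := by
        intro i j
        rw [hxm, hym, Matrix.scalar_apply, Matrix.diagonal_mul, Matrix.mul_diagonal,
          Matrix.map_apply]
        exact (Algebra.commutes (B i j) (algebraMap ℂ (H →L[ℂ] H) z - A)).symm
      exact Matrix.ext h
    -- Cayley-Hamilton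
    have hch : aeval ym B.charpoly = 0 := by
      have h0 := Matrix.aeval_self_charpoly B
      have h1 := congrArg (AlgHom.mapMatrix (R := ℂ) (Algebra.ofId ℂ (H →L[ℂ] H))) h0
      rw [map_zero] at h1
      rw [← Polynomial.aeval_algHom_apply] at h1
      have h2 : (AlgHom.mapMatrix (R := ℂ) (Algebra.ofId ℂ (H →L[ℂ] H))) B = ym := by
        ext i j
        simp [AlgHom.mapMatrix_apply, Matrix.map_apply, Algebra.ofId_apply, hym]
      rwa [h2] at h1
    -- aeval xm charpoly is a unit
    have hsplit := (IsAlgClosed.splits B.charpoly).eq_prod_roots_of_monic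
      (Matrix.charpoly_monic B)
    have hux : IsUnit (aeval xm B.charpoly) := by
      rw [hsplit, ← Multiset.prod_toList, map_list_prod]
      apply List.prod_isUnit
      intro m hm
      simp only [List.mem_map, Multiset.mem_toList, Multiset.mem_map] at hm
      obtain ⟨p1, ⟨r, hr, rfl⟩, rfl⟩ := hm
      rw [map_sub, aeval_X, aeval_C]
      have hr' : r ∈ spectrum ℂ B :=
        root_charpoly_mem_spectrum' B (mem_roots'.mp hr).2
      have hzr := hzb r hr'
      rw [spectrum.notMem_iff] at hzr
      have hxr : xm - algebraMap ℂ (Matrix (Fin d) (Fin d) (H →L[ℂ] H)) r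
          = Matrix.scalar (Fin d) (algebraMap ℂ (H →L[ℂ] H) (z - r) - A) := by
        ext i j
        rw [Matrix.sub_apply, hxm, Matrix.scalar_apply, Matrix.scalar_apply,
          Matrix.algebraMap_eq_diagonal, Matrix.diagonal_apply, Matrix.diagonal_apply,
          Matrix.diagonal_apply]
        by_cases hij : i = j
        · simp only [hij, if_true, Pi.algebraMap_apply, map_sub]
          abel
        · simp [hij]
      rw [hxr]
      exact hzr.map (Matrix.scalar (Fin d))
    obtain ⟨s', hs1, hs2⟩ := sub_dvd_aeval_sub_of_commute xm ym hcomm B.charpoly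
    rw [hch, sub_zero] at hs1 hs2
    have hunit_xy : IsUnit (xm - ym) := isUnit_of_eq_mul' _ _ _ hux hs1 hs2
    -- transfer to T
    have hTz : algebraMap ℂ (PiLp 2 (fun _ : Fin d => H) →L[ℂ] PiLp 2 (fun _ : Fin d => H)) z - T
        = matCLM (xm - ym) := by
      ext w : 1
      ext i
      rw [ContinuousLinearMap.sub_apply, matCLM_apply]
      have h2 : ∀ j, (algebraMap ℂ (H →L[ℂ] H) (B i j)) (w j) = B i j • w j := by
        intro j
        rw [Algebra.algebraMap_eq_smul_one]
        simp
      have hterm : ∀ j, (xm - ym) i j (w j)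
          = (if i = j then (algebraMap ℂ (H →L[ℂ] H) z - A) (w j) else 0) - B i j • w j := by
        intro j
        rw [Matrix.sub_apply, ContinuousLinearMap.sub_apply, hxm, hym,
          Matrix.scalar_apply, Matrix.diagonal_apply, Matrix.map_apply, h2 j]
        congr 1
        split <;> simp
      rw [Finset.sum_congr rfl (fun j _ => hterm j), Finset.sum_sub_distrib,
        Finset.sum_ite_eq (Finset.univ : Finset (Fin d)) i
          (fun j => (algebraMap ℂ (H →L[ℂ] H) z - A) (w j))]
      simp only [Finset.mem_univ, if_true]
      rw [Algebra.algebraMap_eq_smul_one]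
      show z • w i - T w i
        = (algebraMap ℂ (H →L[ℂ] H) z - A) (w i) - ∑ j, B i j • w j
      rw [hT w i, ContinuousLinearMap.sub_apply, Algebra.algebraMap_eq_smul_one]
      show z • w i - (A (w i) + ∑ j, B i j • w j)
        = (z • w i - A (w i)) - ∑ j, B i j • w j
      abel
    rw [spectrum.mem_iff] at hz
    exact hz (hTz ▸ matCLM_isUnit hunit_xy)
  · -- σ(A) + σ(B) ⊆ σ(T)
    rintro z ⟨a, ha, b, hb, rfl⟩
    by_contra hz
    rw [spectrum.mem_iff, not_not] at hz
    obtain ⟨u, hu⟩ := hz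
    obtain ⟨v, hv, hBv⟩ := exists_eigenvector_of_mem_spectrum' B hb
    set N : H →L[ℂ] H := algebraMap ℂ (H →L[ℂ] H) a - A with hN
    have hNnormal : star N * N = N * star N := by
      have hcm : Commute (star N) N := by
        rw [hN, star_sub]
        have hsa : star (algebraMap ℂ (H →L[ℂ] H) a)
            = algebraMap ℂ (H →L[ℂ] H) (starRingEnd ℂ a) := by
          rw [Algebra.algebraMap_eq_smul_one, Algebra.algebraMap_eq_smul_one, star_smul, star_one]
          rfl
        rw [hsa]
        exact Commute.sub_left
          (Commute.sub_right (Algebra.commutes _ _) (Algebra.commutes _ _))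
          (Commute.sub_right ((Algebra.commutes _ _).symm) hA.star_comm_self)
      exact hcm
    rw [spectrum.mem_iff] at ha
    set C0 : ℝ := ‖((↑u⁻¹ : PiLp 2 (fun _ : Fin d => H) →L[ℂ] PiLp 2 (fun _ : Fin d => H)))‖
      with hC0def
    have hC0 : 0 ≤ C0 := by
      rw [hC0def]
      exact ContinuousLinearMap.opNorm_nonneg _
    have hcpos : (0:ℝ) < (C0 + 1)⁻¹ := by positivity
    have happrox : ∃ x0 : H, ‖N x0‖ < (C0 + 1)⁻¹ * ‖x0‖ := by
      by_contra hcon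
      push_neg at hcon
      exact ha (isUnit_of_normal_of_bound N hNnormal hcpos hcon)
    obtain ⟨x0, hx0⟩ := happrox
    have hx0pos : 0 < ‖x0‖ := by
      by_contra h
      push_neg at h
      have h0 : ‖x0‖ = 0 := le_antisymm h (norm_nonneg _)
      rw [h0, mul_zero] at hx0
      exact absurd hx0 (not_lt.mpr (norm_nonneg _))
    set nv : ℝ := Real.sqrt (∑ i, ‖v i‖ ^ 2) with hnv
    have hnvpos : 0 < nv := by
      rw [hnv]
      apply Real.sqrt_pos.mpr
      obtain ⟨i, hi⟩ := Function.ne_iff.mp hv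
      have hvi : 0 < ‖v i‖ ^ 2 := by
        have := norm_pos_iff.mpr hi
        positivity
      exact Finset.sum_pos' (fun j _ => by positivity) ⟨i, Finset.mem_univ i, hvi⟩
    have hnorm_smulvec : ∀ w : H,
        ‖(WithLp.toLp 2 (fun i => v i • w) : PiLp 2 (fun _ : Fin d => H))‖ = nv * ‖w‖ := by
      intro w
      rw [PiLp.norm_eq_of_L2]
      have hterm : ∀ i : Fin d, ‖(v i • w : H)‖ ^ 2 = ‖v i‖ ^ 2 * ‖w‖ ^ 2 := fun i => by
        rw [norm_smul, mul_pow]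
      calc Real.sqrt (∑ i, ‖(WithLp.toLp 2 (fun i => v i • w) : PiLp 2 (fun _ : Fin d => H)) i‖ ^ 2)
          = Real.sqrt ((∑ i, ‖v i‖ ^ 2) * ‖w‖ ^ 2) := by
            rw [Finset.sum_mul]
            congr 1
            exact Finset.sum_congr rfl (fun i _ => hterm i)
        _ = nv * ‖w‖ := by
            rw [Real.sqrt_mul (by positivity), Real.sqrt_sq (norm_nonneg w), hnv]
    set y0 : PiLp 2 (fun _ : Fin d => H) := WithLp.toLp 2 (fun i => v i • x0) with hy0
    have happ : (algebraMap ℂ (PiLp 2 (fun _ : Fin d => H) →L[ℂ] PiLp 2 (fun _ : Fin d => H)) (a + b)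
        - T) y0 = (WithLp.toLp 2 (fun i => v i • (N x0)) : PiLp 2 (fun _ : Fin d => H)) := by
      ext i
      rw [ContinuousLinearMap.sub_apply]
      rw [Algebra.algebraMap_eq_smul_one]
      have hsum : ∑ j, B i j • (v j • x0) = (b * v i) • x0 := by
        rw [Finset.sum_congr rfl (fun j _ => smul_smul (B i j) (v j) x0), ← Finset.sum_smul]
        congr 1
        have hmv := congrFun hBv i
        simpa [Matrix.mulVec, dotProduct] using hmv
      show (a + b) • (y0 i) - T y0 i = v i • (N x0)
      rw [hT y0 i]
      show (a + b) • (v i • x0) - (A (v i • x0) + ∑ j, B i j • (v j • x0)) = v i • (N x0)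
      rw [hsum, map_smul]
      have hNx : N x0 = a • x0 - A x0 := by
        rw [hN, ContinuousLinearMap.sub_apply, Algebra.algebraMap_eq_smul_one]
        simp
      rw [hNx]
      module
    have h1 : (↑u⁻¹ : PiLp 2 (fun _ : Fin d => H) →L[ℂ] PiLp 2 (fun _ : Fin d => H))
        * (algebraMap ℂ _ (a + b) - T) = 1 := by
      rw [← hu]
      exact u.inv_mul
    have hQ : (↑u⁻¹ : PiLp 2 (fun _ : Fin d => H) →L[ℂ] PiLp 2 (fun _ : Fin d => H))
        ((algebraMap ℂ _ (a + b) - T) y0) = y0 := by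
      have h2 : ((↑u⁻¹ : PiLp 2 (fun _ : Fin d => H) →L[ℂ] PiLp 2 (fun _ : Fin d => H))
          * (algebraMap ℂ _ (a + b) - T)) y0 = y0 := by
        rw [h1]
        rfl
      exact h2
    have hchain : ‖y0‖ ≤ C0 * ‖(algebraMap ℂ _ (a + b) - T) y0‖ := by
      conv_lhs => rw [← hQ]
      exact le_opNorm _ _
    have hy0n : ‖y0‖ = nv * ‖x0‖ := hnorm_smulvec x0
    rw [happ, hnorm_smulvec (N x0), hy0n] at hchain
    have hfrac : C0 * (C0 + 1)⁻¹ < 1 := by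
      rw [← div_eq_mul_inv]
      exact (div_lt_one (by positivity)).mpr (lt_add_one C0)
    have hA1 : C0 * (nv * ‖N x0‖) ≤ C0 * (nv * ((C0 + 1)⁻¹ * ‖x0‖)) :=
      mul_le_mul_of_nonneg_left (mul_le_mul_of_nonneg_left hx0.le hnvpos.le) hC0
    have hA2 : C0 * (nv * ((C0 + 1)⁻¹ * ‖x0‖)) = (C0 * (C0 + 1)⁻¹) * (nv * ‖x0‖) := by ring
    have hA3 : (C0 * (C0 + 1)⁻¹) * (nv * ‖x0‖) < 1 * (nv * ‖x0‖) :=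
      mul_lt_mul_of_pos_right hfrac (mul_pos hnvpos hx0pos)
    linarith
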